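/- Let 𝒫 = {(a₂₁, tr A, det A) ∈ ℂ³ : A = [aᵢⱼ] is a 2×2 complex matrix with operator norm ‖A‖ < 1} (the pentablock). Suppose a ∈ ℂ with a ≠ 0 and (s,p) ∈ ℂ² satisfies s = conj(s)·p, |p| = 1 and |s| ≤ 2. Then |a|² = 1 − |s|²/4 if and only if the set {λ ∈ ℂ : (λa, s, p) ∈ closure(𝒫)} is equal to the closed unit disc {λ ∈ ℂ : |λ| ≤ 1}. -/

import Mathlib

set_option maxHeartbeats 1000000
set_option synthInstance.maxHeartbeats 400000

/-- The pentablock: the image of the open unit ball (operator norm) of `2 × 2` complex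
matrices under `A ↦ (a₂₁, tr A, det A)`. -/
noncomputable def pentablock : Set (ℂ × ℂ × ℂ) :=
  {x | ∃ A : Matrix (Fin 2) (Fin 2) ℂ,
    ‖Matrix.toEuclideanCLM (𝕜 := ℂ) (n := Fin 2) A‖ < 1 ∧
    x = (A 1 0, Matrix.trace A, Matrix.det A)}

open Matrix in
theorem pent_col (A : Matrix (Fin 2) (Fin 2) ℂ)
    (hA : ‖Matrix.toEuclideanCLM (𝕜 := ℂ) (n := Fin 2) A‖ ≤ 1)
    (j : Fin 2) : ‖A 0 j‖ ^ 2 + ‖A 1 j‖ ^ 2 ≤ 1 := by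
  set T := Matrix.toEuclideanCLM (𝕜 := ℂ) (n := Fin 2) A
  have hv : ‖T (EuclideanSpace.single j (1:ℂ))‖ ≤ 1 := by
    calc ‖T (EuclideanSpace.single j (1:ℂ))‖ ≤ ‖T‖ * ‖EuclideanSpace.single j (1:ℂ)‖ :=
      T.le_opNorm _
    _ ≤ 1 := by simp [EuclideanSpace.norm_single, hA]
  have hTv : T (EuclideanSpace.single j (1:ℂ)) =
      (WithLp.equiv _ _).symm (fun i => A i j) := by
    rw [show EuclideanSpace.single j (1:ℂ) = (WithLp.equiv _ _).symm (Pi.single j 1) from rfl]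
    rw [WithLp.equiv_symm_apply, Matrix.toEuclideanCLM_toLp]
    congr 1
    simp [Matrix.toLin'_apply, Matrix.mulVec_single]
    rfl
  rw [hTv] at hv
  have hnn : ‖(WithLp.equiv 2 (Fin 2 → ℂ)).symm (fun i => A i j)‖ ^2
      = ‖A 0 j‖ ^ 2 + ‖A 1 j‖ ^ 2 := by
    rw [EuclideanSpace.norm_eq]
    rw [Real.sq_sqrt (by positivity)]
    simp [Fin.sum_univ_two]
  nlinarith [norm_nonneg ((WithLp.equiv 2 (Fin 2 → ℂ)).symm (fun i => A i j))]

theorem pent_row (A : Matrix (Fin 2) (Fin 2) ℂ)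
    (hA : ‖Matrix.toEuclideanCLM (𝕜 := ℂ) (n := Fin 2) A‖ ≤ 1)
    (i : Fin 2) : ‖A i 0‖ ^ 2 + ‖A i 1‖ ^ 2 ≤ 1 := by
  have hst : ‖Matrix.toEuclideanCLM (𝕜 := ℂ) (n := Fin 2) (Matrix.conjTranspose A)‖ ≤ 1 := by
    rw [show Matrix.conjTranspose A = star A from rfl, map_star]
    have heq : ‖star (Matrix.toEuclideanCLM (𝕜 := ℂ) (n := Fin 2) A)‖
        = ‖Matrix.toEuclideanCLM (𝕜 := ℂ) (n := Fin 2) A‖ := by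
      rw [ContinuousLinearMap.star_eq_adjoint]
      exact ContinuousLinearMap.adjoint.norm_map _
    rw [heq]
    exact hA
  have h := pent_col (Matrix.conjTranspose A) hst i
  simpa [Matrix.conjTranspose_apply] using h

/-- Every point of the closure of the pentablock satisfies `|a₂₁|² + |s|²/4 ≤ 1`. -/
theorem closure_pent_bound {x : ℂ × ℂ × ℂ} (hx : x ∈ closure pentablock) :
    ‖x.1‖ ^ 2 + ‖x.2.1‖ ^ 2 / 4 ≤ 1 := by
  have hsub : pentablock ⊆ {y : ℂ × ℂ × ℂ |
      ‖y.1‖ ^ 2 + ‖y.2.1‖ ^ 2 / 4 ≤ 1} := by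
    rintro y ⟨A, hA, rfl⟩
    have hA' := le_of_lt hA
    have h1 := pent_col A hA' 0
    have h2 := pent_row A hA' 1
    have htr : Matrix.trace A = A 0 0 + A 1 1 := Matrix.trace_fin_two A
    have hs : ‖Matrix.trace A‖ ≤ ‖A 0 0‖ + ‖A 1 1‖ := by
      rw [htr]; exact norm_add_le _ _
    simp only [Set.mem_setOf_eq]
    have h00 := norm_nonneg (A 0 0)
    have h11 := norm_nonneg (A 1 1)
    have h10 := norm_nonneg (A 1 0)
    have htr0 := norm_nonneg (Matrix.trace A)
    nlinarith [sq_nonneg (‖A 0 0‖ - ‖A 1 1‖),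
      mul_self_le_mul_self htr0 hs]
  have hcl : IsClosed {y : ℂ × ℂ × ℂ |
      ‖y.1‖ ^ 2 + ‖y.2.1‖ ^ 2 / 4 ≤ 1} := by
    apply isClosed_le
    · apply Continuous.add
      · exact (continuous_norm.comp continuous_fst).pow 2
      · exact ((continuous_norm.comp (continuous_fst.comp continuous_snd)).pow 2).div_const 4
    · exact continuous_const
  exact closure_minimal hsub hcl hx

open scoped InnerProductSpace in
theorem unitary_clm_norm_le (A : Matrix (Fin 2) (Fin 2) ℂ)
    (hU : Matrix.conjTranspose A * A = 1) :
    ‖Matrix.toEuclideanCLM (𝕜 := ℂ) (n := Fin 2) A‖ ≤ 1 := by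
  set T := Matrix.toEuclideanCLM (𝕜 := ℂ) (n := Fin 2) A with hT
  have h1 : star T * T = 1 := by
    rw [hT, ← map_star, ← map_mul]
    rw [show star A = Matrix.conjTranspose A from rfl, hU, map_one]
  have key : ∀ x : EuclideanSpace ℂ (Fin 2), ‖T x‖ = ‖x‖ := by
    intro x
    have h2 : ⟪(ContinuousLinearMap.adjoint T) (T x), x⟫_ℂ = ⟪T x, T x⟫_ℂ :=
      ContinuousLinearMap.adjoint_inner_left T x (T x)
    rw [← ContinuousLinearMap.star_eq_adjoint] at h2
    have h3 : (star T) (T x) = x := by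
      have h := DFunLike.congr_fun h1 x
      simpa using h
    rw [h3] at h2
    have h5 : (‖x‖)^2 = (‖T x‖)^2 := by
      rw [← inner_self_eq_norm_sq (𝕜 := ℂ), ← inner_self_eq_norm_sq (𝕜 := ℂ), h2]
    nlinarith [norm_nonneg x, norm_nonneg (T x)]
  exact T.opNorm_le_bound zero_le_one (fun x => by rw [key x, one_mul])

/-- Any point obtained from a unitary matrix lies in the closure of the pentablock. -/
theorem mem_closure_of_unitary (A : Matrix (Fin 2) (Fin 2) ℂ)
    (hU : Matrix.conjTranspose A * A = 1) :
    (A 1 0, Matrix.trace A, Matrix.det A) ∈ closure pentablock := by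
  have hnorm := unitary_clm_norm_le A hU
  set x := A 1 0
  set s := Matrix.trace A
  set p := Matrix.det A
  have hmem : ∀ n : ℕ, ((((n:ℝ)/(n+1) : ℝ) : ℂ) * x, ((((n:ℝ)/(n+1) : ℝ)) : ℂ) * s,
      ((((n:ℝ)/(n+1) : ℝ)) : ℂ)^2 * p) ∈ pentablock := by
    intro n
    set r : ℝ := (n:ℝ)/(n+1) with hr
    have hr0 : 0 ≤ r := by positivity
    have hr1 : r < 1 := by
      rw [hr, div_lt_one (by positivity)]
      linarith
    refine ⟨(r : ℂ) • A, ?_, ?_⟩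
    · rw [map_smul]
      have hns := norm_smul ((r:ℂ)) (Matrix.toEuclideanCLM (𝕜 := ℂ) (n := Fin 2) A)
      rw [hns]
      have : ‖(r:ℂ)‖ = r := by
        rw [Complex.norm_real, Real.norm_eq_abs, abs_of_nonneg hr0]
      rw [this]
      calc r * ‖Matrix.toEuclideanCLM (𝕜 := ℂ) (n := Fin 2) A‖ ≤ r * 1 :=
        mul_le_mul_of_nonneg_left hnorm hr0
      _ < 1 := by linarith
    · refine Prod.ext ?_ (Prod.ext ?_ ?_) <;>
        simp [Matrix.smul_apply, Matrix.trace_smul, Matrix.det_smul, smul_eq_mul,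
          Fintype.card_fin, x, s, p]
  have htend : Filter.Tendsto (fun n : ℕ => ((((n:ℝ)/(n+1) : ℝ) : ℂ) * x,
      ((((n:ℝ)/(n+1) : ℝ)) : ℂ) * s, ((((n:ℝ)/(n+1) : ℝ)) : ℂ)^2 * p))
      Filter.atTop (nhds (x, s, p)) := by
    have hrt : Filter.Tendsto (fun n : ℕ => (((n:ℝ)/(n+1) : ℝ) : ℂ)) Filter.atTop (nhds 1) := by
      have : Filter.Tendsto (fun n : ℕ => ((n:ℝ)/(n+1) : ℝ)) Filter.atTop (nhds 1) :=
        tendsto_natCast_div_add_atTop (1 : ℝ)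
      have := (Complex.continuous_ofReal.tendsto 1).comp this
      exact this
    have h1 : Filter.Tendsto (fun n : ℕ => ((((n:ℝ)/(n+1) : ℝ)) : ℂ) * x)
        Filter.atTop (nhds x) := by
      simpa using hrt.mul (tendsto_const_nhds (x := x))
    have h2 : Filter.Tendsto (fun n : ℕ => ((((n:ℝ)/(n+1) : ℝ)) : ℂ) * s)
        Filter.atTop (nhds s) := by
      simpa using hrt.mul (tendsto_const_nhds (x := s))
    have h3 : Filter.Tendsto (fun n : ℕ => ((((n:ℝ)/(n+1) : ℝ)) : ℂ)^2 * p)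
        Filter.atTop (nhds p) := by
      simpa using ((hrt.pow 2).mul (tendsto_const_nhds (x := p)))
    exact h1.prodMk_nhds (h2.prodMk_nhds h3)
  exact mem_closure_of_tendsto htend (Filter.Eventually.of_forall hmem)

theorem construct_mem (s p : ℂ) (h₁ : s = (starRingEnd ℂ) s * p) (h₂ : ‖p‖ = 1)
    (x : ℂ) (hx : ‖x‖ ^ 2 ≤ 1 - ‖s‖ ^ 2 / 4) :
    (x, s, p) ∈ closure pentablock := by
  have hp0 : p ≠ 0 := by
    intro h; rw [h] at h₂; simp at h₂
  obtain ⟨μ, hμ2⟩ : ∃ μ : ℂ, μ ^ 2 = p := by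
    refine ⟨Complex.exp (Complex.log p / 2), ?_⟩
    have h : Complex.exp (Complex.log p / 2) ^ 2
        = Complex.exp (Complex.log p / 2 + Complex.log p / 2) := by
      rw [Complex.exp_add]; ring
    rw [h, add_halves, Complex.exp_log hp0]
  have habsμ : ‖μ‖ = 1 := by
    have h : (‖μ‖) ^ 2 = 1 := by
      rw [← norm_pow, hμ2, h₂]
    nlinarith [norm_nonneg μ]
  have hμ0 : μ ≠ 0 := by
    intro h; rw [h] at habsμ; simp at habsμ
  have hcμ : (starRingEnd ℂ) μ * μ = 1 := by
    rw [mul_comm, Complex.mul_conj, Complex.normSq_eq_norm_sq, habsμ]; norm_num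
  have hcp : (starRingEnd ℂ) p * p = 1 := by
    rw [mul_comm, Complex.mul_conj, Complex.normSq_eq_norm_sq, h₂]; norm_num
  have hcp2 : (starRingEnd ℂ) p = ((starRingEnd ℂ) μ) ^ 2 := by
    rw [← hμ2, map_pow]
  have h₁' : (starRingEnd ℂ) s = s * (starRingEnd ℂ) p := by
    have := congrArg (starRingEnd ℂ) h₁
    simpa [map_mul] using this
  have hinv : (starRingEnd ℂ) μ = μ⁻¹ := eq_inv_of_mul_eq_one_left hcμ
  obtain ⟨τ, hτ⟩ : ∃ t : ℝ, s = μ * (t : ℂ) := by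
    refine ⟨(s / μ).re, ?_⟩
    have hreal : (starRingEnd ℂ) (s / μ) = s / μ := by
      rw [map_div₀, h₁', hcp2, hinv]
      field_simp
    have hτc : (((s / μ).re : ℝ) : ℂ) = s / μ := Complex.conj_eq_iff_re.mp hreal
    rw [hτc]; field_simp
  have habs_s : ‖s‖ ^ 2 = τ ^ 2 := by
    rw [hτ, norm_mul, habsμ, Complex.norm_real, Real.norm_eq_abs, one_mul, sq_abs]
  obtain ⟨c, hcdef⟩ : ∃ c : ℝ, τ = 2 * c := ⟨τ / 2, by ring⟩
  have hkey : ‖x‖ ^ 2 + c ^ 2 ≤ 1 := by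
    have hτ2 : τ ^ 2 = 4 * c ^ 2 := by rw [hcdef]; ring
    linarith [hx, habs_s, hτ2]
  obtain ⟨d, hd⟩ : ∃ d : ℝ, d ^ 2 = 1 - ‖x‖ ^ 2 - c ^ 2 :=
    ⟨Real.sqrt (1 - ‖x‖ ^ 2 - c ^ 2), Real.sq_sqrt (by linarith)⟩
  obtain ⟨z, hz1, hzsum⟩ : ∃ z : ℂ, z * (starRingEnd ℂ) z = 1 - ((‖x‖ ^ 2 : ℝ) : ℂ)
      ∧ z + (starRingEnd ℂ) z = ((τ : ℝ) : ℂ) := by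
    refine ⟨(c : ℂ) + (d : ℂ) * Complex.I, ?_, ?_⟩
    · have hcz : (starRingEnd ℂ) ((c : ℂ) + (d : ℂ) * Complex.I)
          = (c : ℂ) - (d : ℂ) * Complex.I := by
        simp [map_add, map_mul, Complex.conj_ofReal, Complex.conj_I]
        ring
      rw [hcz]
      have hI : Complex.I ^ 2 = -1 := Complex.I_sq
      have h : ((c : ℂ) + (d : ℂ) * Complex.I) * ((c : ℂ) - (d : ℂ) * Complex.I)
          = (c : ℂ) ^ 2 + (d : ℂ) ^ 2 := by
        linear_combination (-((d:ℂ)^2)) * hI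
      rw [h]
      have hr : c ^ 2 + d ^ 2 = 1 - ‖x‖ ^ 2 := by linarith
      have : ((c : ℂ))^2 + ((d : ℂ))^2 = ((c ^ 2 + d ^ 2 : ℝ) : ℂ) := by push_cast; ring
      rw [this, hr]
      push_cast; ring
    · have hcz : (starRingEnd ℂ) ((c : ℂ) + (d : ℂ) * Complex.I)
          = (c : ℂ) - (d : ℂ) * Complex.I := by
        simp [map_add, map_mul, Complex.conj_ofReal, Complex.conj_I]
        ring
      rw [hcz, hcdef]
      push_cast; ring
  have hxx : x * (starRingEnd ℂ) x = ((‖x‖ ^ 2 : ℝ) : ℂ) := by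
    rw [Complex.mul_conj, Complex.normSq_eq_norm_sq]
  set A : Matrix (Fin 2) (Fin 2) ℂ :=
    !![μ * z, -(p * (starRingEnd ℂ) x); x, p * (starRingEnd ℂ) (μ * z)] with hAdef
  have hU : Matrix.conjTranspose A * A = 1 := by
    ext i j
    fin_cases i <;> fin_cases j <;>
      simp [hAdef, Matrix.mul_apply, Fin.sum_univ_two, Matrix.conjTranspose_apply,
        Matrix.one_apply, map_mul, map_neg]
    · linear_combination ((starRingEnd ℂ) z * z) * hcμ + hz1 + hxx
    · ring
    · ring
    · linear_combination (x * (starRingEnd ℂ) x + μ * (starRingEnd ℂ) μ *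
        (z * (starRingEnd ℂ) z)) * hcp + hxx + (z * (starRingEnd ℂ) z) * hcμ + hz1
  have h10 : A 1 0 = x := by simp [hAdef]
  have htr : Matrix.trace A = s := by
    rw [Matrix.trace_fin_two]
    have e00 : A 0 0 = μ * z := by simp [hAdef]
    have e11 : A 1 1 = p * (starRingEnd ℂ) (μ * z) := by simp [hAdef]
    rw [e00, e11, map_mul, hτ, ← hzsum]
    linear_combination (-((starRingEnd ℂ) μ * (starRingEnd ℂ) z)) * hμ2
      + (μ * (starRingEnd ℂ) z) * hcμ
  have hdet : Matrix.det A = p := by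
    rw [hAdef, Matrix.det_fin_two_of, map_mul]
    linear_combination (p * (z * (starRingEnd ℂ) z)) * hcμ + p * hz1 + p * hxx
  have := mem_closure_of_unitary A hU
  rw [h10, htr, hdet] at this
  exact this

/-- For `a ≠ 0` and `(s,p)` in the distinguished boundary of the symmetrized bidisc,
`|a|² = 1 - |s|²/4` iff `{λ : (λa, s, p) ∈ closure 𝒫}` is the closed unit disc. -/
theorem statement1 (a : ℂ) (ha : a ≠ 0) (s p : ℂ) (h₁ : s = (starRingEnd ℂ) s * p)
    (h₂ : ‖p‖ = 1) (h₃ : ‖s‖ ≤ 2) :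
    ‖a‖ ^ 2 = 1 - ‖s‖ ^ 2 / 4 ↔
      {l : ℂ | (l * a, s, p) ∈ closure pentablock} = {l : ℂ | ‖l‖ ≤ 1} := by
  have ha2 : 0 < ‖a‖ ^ 2 := by
    have := norm_pos_iff.mpr ha
    positivity
  have key : ∀ l : ℂ, (l * a, s, p) ∈ closure pentablock ↔
      ‖l‖ ^ 2 * ‖a‖ ^ 2 ≤ 1 - ‖s‖ ^ 2 / 4 := by
    intro l
    constructor
    · intro hmem
      have := closure_pent_bound hmem
      simp only [norm_mul, mul_pow] at this ⊢
      linarith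
    · intro hle
      have hx : ‖l * a‖ ^ 2 ≤ 1 - ‖s‖ ^ 2 / 4 := by
        rw [norm_mul, mul_pow]; exact hle
      exact construct_mem s p h₁ h₂ (l * a) hx
  constructor
  · intro h
    ext l
    simp only [Set.mem_setOf_eq, key l, h]
    have hpos : 0 < 1 - ‖s‖ ^ 2 / 4 := by rw [← h]; exact ha2
    constructor
    · intro h'
      nlinarith [norm_nonneg l, hpos, sq_nonneg (‖l‖ - 1),
        sq_nonneg (‖l‖ + 1)]
    · intro h'
      have hll : ‖l‖ ^ 2 ≤ 1 := by nlinarith [norm_nonneg l]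
      nlinarith [hpos, hll]
  · intro h
    have h1 : ‖a‖ ^ 2 ≤ 1 - ‖s‖ ^ 2 / 4 := by
      have : (1 : ℂ) ∈ {l : ℂ | ‖l‖ ≤ 1} := by simp
      rw [← h] at this
      have h2' := (key 1).mp this
      simpa using h2'
    have hRnn : (0:ℝ) ≤ 1 - ‖s‖ ^ 2 / 4 := by nlinarith [norm_nonneg s]
    set R : ℝ := Real.sqrt (1 - ‖s‖ ^ 2 / 4) with hRdef
    have hR2 : R ^ 2 = 1 - ‖s‖ ^ 2 / 4 := Real.sq_sqrt hRnn
    have hR0 : 0 ≤ R := Real.sqrt_nonneg _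
    have hapos : 0 < ‖a‖ := norm_pos_iff.mpr ha
    have hl : ((R / ‖a‖ : ℝ) : ℂ) ∈ {l : ℂ | ‖l‖ ≤ 1} := by
      rw [← h]
      simp only [Set.mem_setOf_eq]
      rw [key]
      have habsl : ‖((R / ‖a‖ : ℝ) : ℂ)‖ = R / ‖a‖ := by
        rw [Complex.norm_real, Real.norm_eq_abs, abs_of_nonneg (by positivity)]
      rw [habsl, div_pow, hR2]
      rw [div_mul_cancel₀ _ (ne_of_gt ha2)]
    simp only [Set.mem_setOf_eq] at hl
    rw [Complex.norm_real, Real.norm_eq_abs, abs_of_nonneg (by positivity), div_le_one hapos] at hl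
    have : R ^ 2 ≤ ‖a‖ ^ 2 := by nlinarith
    rw [hR2] at this
    linarith
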